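/- Let Ω ⊂ ℂ be a bounded open set, h : Ω → ℂ a C¹ map with finite Dirichlet energy, and η a test function on Ω. For ε ∈ ℝ small enough that z + ε·η(z) ∈ Ω for all z ∈ Ω, define the inner variation h^ε(z) = h(z + ε·η(z)). Then the function ε ↦ E[h^ε] is differentiable at ε = 0, and its derivative there equals 4·Re ∫_Ω h_z(z)·conj(h_z̄(z))·η_z̄(z) dA(z). -/

import Mathlib

open Complex MeasureTheory Set Topology

/-- Wirtinger derivative `∂f/∂z` via the real Fréchet derivative. -/
noncomputable def wdz (f : ℂ → ℂ) (z : ℂ) : ℂ :=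
  (1 / 2 : ℂ) * (fderiv ℝ f z 1 - Complex.I * fderiv ℝ f z Complex.I)

/-- Wirtinger derivative `∂f/∂z̄` via the real Fréchet derivative. -/
noncomputable def wdzbar (f : ℂ → ℂ) (z : ℂ) : ℂ :=
  (1 / 2 : ℂ) * (fderiv ℝ f z 1 + Complex.I * fderiv ℝ f z Complex.I)

/-- Dirichlet energy of `f` on `Ω`. -/
noncomputable def energy (Ω : Set ℂ) (f : ℂ → ℂ) : ℝ :=
  ∫ z in Ω, ((‖wdz f z‖) ^ 2 + (‖wdzbar f z‖) ^ 2)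

/-- A test function on `Ω`: smooth with compact support contained in `Ω`. -/
def IsTestFunction (Ω : Set ℂ) (η : ℂ → ℂ) : Prop :=
  ContDiff ℝ (⊤ : ℕ∞) η ∧ IsCompact (tsupport η) ∧ tsupport η ⊆ Ω

/-- An admissible change of variables of `Ω`: a `C¹` diffeomorphism of `Ω` onto itself
with everywhere positive Jacobian, equal to the identity outside a compact subset of `Ω`. -/
structure IsAdmissibleChange (Ω : Set ℂ) (ξ : ℂ → ℂ) : Prop where
  contDiffOn : ContDiffOn ℝ 1 ξ Ω
  bijOn : Set.BijOn ξ Ω Ω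
  jac_pos : ∀ z ∈ Ω, (‖wdz ξ z‖) ^ 2 - (‖wdzbar ξ z‖) ^ 2 > 0
  eq_id : ∃ K : Set ℂ, IsCompact K ∧ K ⊆ Ω ∧ ∀ z ∉ K, ξ z = z

/-- `h` is Hopf harmonic on `Ω`: `h` is `C¹` and its Hopf product is holomorphic on `Ω`. -/
def IsHopfHarmonic (Ω : Set ℂ) (h : ℂ → ℂ) : Prop :=
  ContDiffOn ℝ 1 h Ω ∧
    DifferentiableOn ℂ (fun z => wdz h z * (starRingEnd ℂ) (wdzbar h z)) Ω

section helpers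

lemma fderiv_apply_eq (f : ℂ → ℂ) (z : ℂ) (v : ℂ) :
    fderiv ℝ f z v = wdz f z * v + wdzbar f z * (starRingEnd ℂ) v := by
  have hv : v = v.re • (1:ℂ) + v.im • Complex.I := by
    simp [Complex.real_smul]
  have h1 : fderiv ℝ f z v = v.re • fderiv ℝ f z 1 + v.im • fderiv ℝ f z Complex.I := by
    conv_lhs => rw [hv]
    rw [map_add, _root_.map_smul, _root_.map_smul]
  rw [h1, wdz, wdzbar]
  have hcv : (starRingEnd ℂ) v = (v.re : ℂ) - v.im * Complex.I := by
    simp [Complex.ext_iff]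
  rw [hcv]
  nth_rewrite 3 [hv]
  simp only [Complex.real_smul, smul_eq_mul]
  have hI : (Complex.I : ℂ) * Complex.I = -1 := Complex.I_mul_I
  ring_nf
  linear_combination (↑v.im * fderiv ℝ f z Complex.I) * Complex.I_sq

lemma wdz_comp (h φ : ℂ → ℂ) (z : ℂ) (hh : DifferentiableAt ℝ h (φ z))
    (hφ : DifferentiableAt ℝ φ z) :
    wdz (fun w => h (φ w)) z
      = wdz h (φ z) * wdz φ z + wdzbar h (φ z) * (starRingEnd ℂ) (wdzbar φ z) ∧
    wdzbar (fun w => h (φ w)) z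
      = wdz h (φ z) * wdzbar φ z + wdzbar h (φ z) * (starRingEnd ℂ) (wdz φ z) := by
  have hcomp : fderiv ℝ (fun w => h (φ w)) z = (fderiv ℝ h (φ z)).comp (fderiv ℝ φ z) :=
    fderiv_comp z hh hφ
  have key : ∀ v : ℂ, fderiv ℝ (fun w => h (φ w)) z v
      = wdz h (φ z) * (wdz φ z * v + wdzbar φ z * (starRingEnd ℂ) v)
        + wdzbar h (φ z) * (starRingEnd ℂ) (wdz φ z * v + wdzbar φ z * (starRingEnd ℂ) v) := by
    intro v
    rw [hcomp]
    simp only [ContinuousLinearMap.coe_comp', Function.comp_apply]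
    rw [← fderiv_apply_eq φ z v, fderiv_apply_eq h (φ z)]
  constructor
  · rw [wdz, key 1, key Complex.I]
    simp only [map_add, map_mul, map_neg, Complex.conj_I, Complex.conj_conj, map_one]
    ring_nf
    simp only [Complex.I_sq]
    ring
  · rw [wdzbar, key 1, key Complex.I]
    simp only [map_add, map_mul, map_neg, Complex.conj_I, Complex.conj_conj, map_one]
    ring_nf
    simp only [Complex.I_sq]
    ring

lemma wdz_affine (η : ℂ → ℂ) (hη : Differentiable ℝ η) (ε : ℝ) (z : ℂ) :
    wdz (fun w => w + (ε:ℂ) * η w) z = 1 + (ε:ℂ) * wdz η z ∧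
    wdzbar (fun w => w + (ε:ℂ) * η w) z = (ε:ℂ) * wdzbar η z := by
  have hd : fderiv ℝ (fun w => w + (ε:ℂ) * η w) z
      = (ContinuousLinearMap.id ℝ ℂ) + (ε:ℂ) • fderiv ℝ η z := by
    have h1 : HasFDerivAt (fun w : ℂ => w) (ContinuousLinearMap.id ℝ ℂ) z := hasFDerivAt_id z
    have h2 : HasFDerivAt (fun w => (ε:ℂ) * η w) ((ε:ℂ) • fderiv ℝ η z) z := by
      simpa using ((hη z).hasFDerivAt.const_mul (ε:ℂ))
    exact (h1.add h2).fderiv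
  constructor
  · rw [wdz, hd, wdz]
    simp only [ContinuousLinearMap.add_apply, ContinuousLinearMap.id_apply,
      ContinuousLinearMap.smul_apply, smul_eq_mul]
    ring_nf
    simp only [Complex.I_sq]
    ring
  · rw [wdzbar, hd, wdzbar]
    simp only [ContinuousLinearMap.add_apply, ContinuousLinearMap.id_apply,
      ContinuousLinearMap.smul_apply, smul_eq_mul]
    ring_nf
    simp only [Complex.I_sq]
    ring

lemma det_fderiv_eq (f : ℂ → ℂ) (z : ℂ) :
    (fderiv ℝ f z).det
      = (‖wdz f z‖)^2 - (‖wdzbar f z‖)^2 := by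
  have hmap : ∀ v : ℂ, fderiv ℝ f z v = wdz f z * v + wdzbar f z * (starRingEnd ℂ) v :=
    fderiv_apply_eq f z
  rw [ContinuousLinearMap.det]
  rw [← LinearMap.det_toMatrix Complex.basisOneI]
  rw [Matrix.det_fin_two]
  simp only [LinearMap.toMatrix_apply, ContinuousLinearMap.coe_coe, Complex.coe_basisOneI,
    Matrix.cons_val_zero, Matrix.cons_val_one, Matrix.head_cons, Complex.coe_basisOneI_repr]
  rw [hmap 1, hmap Complex.I]
  simp only [map_one, mul_one, Complex.conj_I, Complex.sq_norm, Complex.normSq_apply,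
    Complex.add_re, Complex.add_im, Complex.mul_re, Complex.mul_im, Complex.I_re, Complex.I_im,
    Complex.neg_re, Complex.neg_im, Complex.one_re, Complex.one_im,
    Matrix.cons_val_zero, Matrix.cons_val_one, Matrix.head_cons]
  ring

lemma energy_alg (p q a b : ℂ) :
    (‖p*a + q*(starRingEnd ℂ) b‖)^2 + (‖p*b + q*(starRingEnd ℂ) a‖)^2
      = ((‖p‖)^2 + (‖q‖)^2) * ((‖a‖)^2 + (‖b‖)^2)
        + 4 * (p * (starRingEnd ℂ) q * a * b).re := by
  simp only [Complex.sq_norm, Complex.normSq_apply, Complex.add_re, Complex.add_im,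
    Complex.mul_re, Complex.mul_im, Complex.conj_re, Complex.conj_im]
  ring

/-- The pointwise expansion of the energy density of the inner variation. -/
lemma pointwise_energy (h η : ℂ → ℂ) (ε : ℝ) (z : ℂ)
    (hhd : DifferentiableAt ℝ h (z + (ε:ℂ) * η z)) (hηd : Differentiable ℝ η) :
    (‖wdz (fun w => h (w + (ε:ℂ) * η w)) z‖)^2
      + (‖wdzbar (fun w => h (w + (ε:ℂ) * η w)) z‖)^2
    = ((‖1 + (ε:ℂ) * wdz η z‖)^2 - (‖(ε:ℂ) * wdzbar η z‖)^2)
        * ((‖wdz h (z + (ε:ℂ) * η z)‖)^2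
            + (‖wdzbar h (z + (ε:ℂ) * η z)‖)^2)
      + ε * (4 * (wdz h (z + (ε:ℂ) * η z) * (starRingEnd ℂ) (wdzbar h (z + (ε:ℂ) * η z))
              * wdzbar η z).re)
      + ε^2 * (2 * ((‖wdz h (z + (ε:ℂ) * η z)‖)^2
                + (‖wdzbar h (z + (ε:ℂ) * η z)‖)^2)
                  * (‖wdzbar η z‖)^2
            + 4 * (wdz h (z + (ε:ℂ) * η z) * (starRingEnd ℂ) (wdzbar h (z + (ε:ℂ) * η z))
              * wdz η z * wdzbar η z).re) := by
  have hφd : DifferentiableAt ℝ (fun w : ℂ => w + (ε:ℂ) * η w) z :=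
    (differentiableAt_id.add ((hηd z).const_mul _))
  obtain ⟨e1, e2⟩ := wdz_comp h (fun w => w + (ε:ℂ) * η w) z hhd hφd
  obtain ⟨e3, e4⟩ := wdz_affine η hηd ε z
  rw [show (fun w => h ((fun w' : ℂ => w' + (ε:ℂ) * η w') w)) = (fun w => h (w + (ε:ℂ) * η w))
      from rfl] at e1 e2
  rw [e1, e2, e3, e4, energy_alg]
  simp only [Complex.sq_norm, Complex.normSq_apply, Complex.mul_re, Complex.mul_im,
    Complex.add_re, Complex.add_im, Complex.conj_re, Complex.conj_im, Complex.ofReal_re,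
    Complex.ofReal_im, Complex.one_re, Complex.one_im]
  ring

end helpers

set_option maxHeartbeats 1000000

/-- The first inner variation of the Dirichlet energy:
`d/dε E[h^ε] |_{ε=0} = 4 Re ∫ h_z conj(h_z̄) η_z̄`. -/
theorem stmt_4 (Ω : Set ℂ) (hΩo : IsOpen Ω) (hΩb : Bornology.IsBounded Ω)
    (h : ℂ → ℂ) (hh : ContDiffOn ℝ 1 h Ω)
    (hfin : IntegrableOn
      (fun z => (‖wdz h z‖) ^ 2 + (‖wdzbar h z‖) ^ 2) Ω volume)
    (η : ℂ → ℂ) (hη : IsTestFunction Ω η)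
    (ε₀ : ℝ) (hε₀ : 0 < ε₀)
    (hin : ∀ ε : ℝ, |ε| < ε₀ → ∀ z ∈ Ω, z + (ε : ℂ) * η z ∈ Ω) :
    HasDerivAt (fun ε : ℝ => energy Ω (fun z => h (z + (ε : ℂ) * η z)))
      (4 * (∫ z in Ω, wdz h z * (starRingEnd ℂ) (wdzbar h z) * wdzbar η z).re) 0 := by
  obtain ⟨hηsm, hKc, hKΩ⟩ := hη
  have hηdiff : Differentiable ℝ η := hηsm.differentiable (by simp)
  have hηcont : Continuous η := hηdiff.continuous
  have hfdc : Continuous (fderiv ℝ η) := hηsm.continuous_fderiv (by simp)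
  -- a global bound C ≥ 1 for η, its derivative, and its Wirtinger derivatives
  have hKcs : HasCompactSupport η := hKc
  obtain ⟨C₀, hC₀⟩ := (hKcs.fderiv (𝕜 := ℝ)).exists_bound_of_continuous hfdc
  obtain ⟨C₁, hC₁⟩ := hKcs.exists_bound_of_continuous hηcont
  set C : ℝ := max (max C₀ C₁) 1 with hCdef
  have hC1 : (1:ℝ) ≤ C := le_max_right _ _
  have hC0 : (0:ℝ) < C := lt_of_lt_of_le one_pos hC1
  have hηb : ∀ z, ‖η z‖ ≤ C := fun z => (hC₁ z).trans ((le_max_right C₀ C₁).trans (le_max_left _ _))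
  have hfb : ∀ z, ‖fderiv ℝ η z‖ ≤ C :=
    fun z => (hC₀ z).trans ((le_max_left C₀ C₁).trans (le_max_left _ _))
  have hwb : ∀ z, ‖wdz η z‖ ≤ C ∧ ‖wdzbar η z‖ ≤ C := by
    intro z
    have h1 : ‖fderiv ℝ η z 1‖ ≤ C := by
      have := (fderiv ℝ η z).le_opNorm 1
      rw [norm_one, mul_one] at this
      exact this.trans (hfb z)
    have hI : ‖fderiv ℝ η z Complex.I‖ ≤ C := by
      have := (fderiv ℝ η z).le_opNorm Complex.I
      simp only [Complex.norm_I, mul_one] at this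
      exact this.trans (hfb z)
    constructor
    · rw [wdz]
      calc ‖(1/2 : ℂ) * (fderiv ℝ η z 1 - Complex.I * fderiv ℝ η z Complex.I)‖
          ≤ 1/2 * (‖fderiv ℝ η z 1‖ + ‖Complex.I * fderiv ℝ η z Complex.I‖) := by
            rw [norm_mul]
            gcongr
            · norm_num
            · exact norm_sub_le _ _
        _ ≤ 1/2 * (C + C) := by
            gcongr
            rw [norm_mul, Complex.norm_I, one_mul]; exact hI
        _ = C := by ring
    · rw [wdzbar]
      calc ‖(1/2 : ℂ) * (fderiv ℝ η z 1 + Complex.I * fderiv ℝ η z Complex.I)‖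
          ≤ 1/2 * (‖fderiv ℝ η z 1‖ + ‖Complex.I * fderiv ℝ η z Complex.I‖) := by
            rw [norm_mul]
            gcongr
            · norm_num
            · exact norm_add_le _ _
        _ ≤ 1/2 * (C + C) := by
            gcongr
            rw [norm_mul, Complex.norm_I, one_mul]; exact hI
        _ = C := by ring
  have hLip : LipschitzWith C.toNNReal η := by
    apply lipschitzWith_of_nnnorm_fderiv_le hηdiff
    intro x
    rw [← norm_toNNReal]
    exact Real.toNNReal_mono (hfb x)
  -- zero outside the support
  have hz0 : ∀ z ∉ tsupport η, η z = 0 ∧ wdz η z = 0 ∧ wdzbar η z = 0 := by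
    intro z hz
    have h1 : η z = 0 := image_eq_zero_of_notMem_tsupport hz
    have h2 : fderiv ℝ η z = 0 := by
      by_contra hne
      exact hz (support_fderiv_subset ℝ (Function.mem_support.2 hne))
    refine ⟨h1, ?_, ?_⟩ <;> simp [wdz, wdzbar, h2]
  -- compact neighborhood K₁ of the support inside Ω
  obtain ⟨r, hr, hrΩ⟩ := hKc.exists_thickening_subset_open hΩo hKΩ
  set K₁ : Set ℂ := Metric.cthickening (r/2) (tsupport η) with hK₁def
  have hK₁c : IsCompact K₁ :=
    Metric.isCompact_of_isClosed_isBounded Metric.isClosed_cthickening (hKc.isBounded.cthickening)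
  have hK₁Ω : K₁ ⊆ Ω :=
    (Metric.cthickening_subset_thickening' hr (by linarith) _).trans hrΩ
  have hKK₁ : tsupport η ⊆ K₁ := Metric.self_subset_cthickening _
  -- continuity of the h-side quantities on Ω
  have hpq : ContinuousOn (fun z => fderiv ℝ h z) Ω :=
    hh.continuousOn_fderiv_of_isOpen hΩo le_rfl
  have hpc : ContinuousOn (wdz h) Ω := by
    unfold wdz
    exact (continuousOn_const.mul ((hpq.clm_apply continuousOn_const).sub
      (continuousOn_const.mul (hpq.clm_apply continuousOn_const))))
  have hqc : ContinuousOn (wdzbar h) Ω := by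
    unfold wdzbar
    exact (continuousOn_const.mul ((hpq.clm_apply continuousOn_const).add
      (continuousOn_const.mul (hpq.clm_apply continuousOn_const))))
  have hGc : ContinuousOn (fun z => (‖wdz h z‖)^2 + (‖wdzbar h z‖)^2) Ω := by
    exact ((continuous_norm.comp_continuousOn hpc).pow 2).add
      ((continuous_norm.comp_continuousOn hqc).pow 2)
  have hTc : ContinuousOn (fun z => wdz h z * (starRingEnd ℂ) (wdzbar h z)) Ω :=
    hpc.mul ((Complex.continuous_conj.comp_continuousOn hqc))
  obtain ⟨CG₀, hCG₀⟩ := hK₁c.exists_bound_of_continuousOn (hGc.mono hK₁Ω)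
  obtain ⟨CT₀, hCT₀⟩ := hK₁c.exists_bound_of_continuousOn (hTc.mono hK₁Ω)
  set CG : ℝ := max CG₀ 0 with hCGdef
  set CT : ℝ := max CT₀ 0 with hCTdef
  have hCG : ∀ x ∈ K₁, ‖(‖wdz h x‖)^2 + (‖wdzbar h x‖)^2‖ ≤ CG :=
    fun x hx => (hCG₀ x hx).trans (le_max_left _ _)
  have hCT : ∀ x ∈ K₁, ‖wdz h x * (starRingEnd ℂ) (wdzbar h x)‖ ≤ CT :=
    fun x hx => (hCT₀ x hx).trans (le_max_left _ _)
  have hCG0 : 0 ≤ CG := le_max_right _ _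
  have hCT0 : 0 ≤ CT := le_max_right _ _
  -- measure-theoretic basics
  have hmΩ : MeasurableSet Ω := hΩo.measurableSet
  have hvolΩ : volume Ω < ⊤ := hΩb.measure_lt_top
  have hmwdz : ∀ f : ℂ → ℂ, Measurable (wdz f) ∧ Measurable (wdzbar f) := by
    intro f
    have h1 : Measurable fun z => fderiv ℝ f z 1 := measurable_fderiv_apply_const ℝ f 1
    have hI : Measurable fun z => fderiv ℝ f z Complex.I := measurable_fderiv_apply_const ℝ f _
    exact ⟨(measurable_const.mul (h1.sub (measurable_const.mul hI))),
      (measurable_const.mul (h1.add (measurable_const.mul hI)))⟩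
  have hmG : Measurable (fun z => (‖wdz h z‖)^2 + (‖wdzbar h z‖)^2) :=
    (((continuous_norm.measurable.comp (hmwdz h).1).pow_const 2).add
      ((continuous_norm.measurable.comp (hmwdz h).2).pow_const 2))
  have hmT : Measurable (fun z => wdz h z * (starRingEnd ℂ) (wdzbar h z)) :=
    (hmwdz h).1.mul (Complex.continuous_conj.measurable.comp (hmwdz h).2)
  -- small parameter threshold
  set δ : ℝ := min ε₀ (min (1/(4*C)) (r/(2*C))) with hδdef
  have hδpos : 0 < δ := lt_min hε₀ (lt_min (by positivity) (by positivity))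
  -- abbreviations (as plain lambdas)
  set E0 : ℝ := ∫ z in Ω, ((‖wdz h z‖)^2 + (‖wdzbar h z‖)^2) with hE0def
  set Ir : ℝ → ℝ := fun ε => ∫ z in Ω,
      (wdz h (z + (ε:ℂ) * η z) * (starRingEnd ℂ) (wdzbar h (z + (ε:ℂ) * η z))
        * wdzbar η z).re with hIrdef
  set R : ℝ → ℝ := fun ε => ∫ z in Ω,
      (2 * ((‖wdz h (z + (ε:ℂ) * η z)‖)^2
          + (‖wdzbar h (z + (ε:ℂ) * η z)‖)^2) * (‖wdzbar η z‖)^2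
        + 4 * (wdz h (z + (ε:ℂ) * η z) * (starRingEnd ℂ) (wdzbar h (z + (ε:ℂ) * η z))
            * wdz η z * wdzbar η z).re) with hRdef
  set B : ℝ := (2*CG*C^2 + 4*CT*C^2) * (volume Ω).toReal with hBdef
  -- the key per-ε facts
  have key : ∀ ε : ℝ, |ε| < δ →
      (energy Ω (fun z => h (z + (ε:ℂ) * η z)) = E0 + ε * (4 * Ir ε) + ε^2 * R ε)
      ∧ |R ε| ≤ B
      ∧ IntegrableOn (fun z => (wdz h (z + (ε:ℂ) * η z)
          * (starRingEnd ℂ) (wdzbar h (z + (ε:ℂ) * η z)) * wdzbar η z).re) Ω volume := by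
    intro ε hε
    have hε₀' : |ε| < ε₀ := lt_of_lt_of_le hε (min_le_left _ _)
    have hεC : |ε| * C < 1/4 := by
      have h1 : |ε| < 1/(4*C) := lt_of_lt_of_le hε ((min_le_right _ _).trans (min_le_left _ _))
      calc |ε| * C < (1/(4*C)) * C := by
            exact mul_lt_mul_of_pos_right h1 hC0
        _ = 1/4 := by field_simp
    have hεr : |ε| * C ≤ r/2 := by
      have h1 : |ε| ≤ r/(2*C) := le_of_lt (lt_of_lt_of_le hε
        ((min_le_right _ _).trans (min_le_right _ _)))
      calc |ε| * C ≤ (r/(2*C)) * C := mul_le_mul_of_nonneg_right h1 hC0.le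
        _ = r/2 := by field_simp
    -- pointwise bounds on the Jacobian factors
    have habsb : ∀ z : ℂ, ‖(ε:ℂ) * wdzbar η z‖ ≤ |ε| * C := by
      intro z
      rw [norm_mul, Complex.norm_real, Real.norm_eq_abs]
      exact mul_le_mul_of_nonneg_left (hwb z).2 (abs_nonneg ε)
    have habsa : ∀ z : ℂ, ‖(ε:ℂ) * wdz η z‖ ≤ |ε| * C := by
      intro z
      rw [norm_mul, Complex.norm_real, Real.norm_eq_abs]
      exact mul_le_mul_of_nonneg_left (hwb z).1 (abs_nonneg ε)
    have halow : ∀ z : ℂ, (3:ℝ)/4 ≤ ‖1 + (ε:ℂ) * wdz η z‖ := by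
      intro z
      have h1 : ‖(1:ℂ)‖ - ‖-((ε:ℂ) * wdz η z)‖ ≤ ‖(1:ℂ) - -((ε:ℂ) * wdz η z)‖ :=
        norm_sub_norm_le _ _
      rw [sub_neg_eq_add, norm_one, norm_neg] at h1
      have h2 : ‖(ε:ℂ) * wdz η z‖ ≤ |ε| * C := habsa z
      have h3 : ‖1 + (ε:ℂ) * wdz η z‖ = ‖(1:ℂ) + (ε:ℂ) * wdz η z‖ := rfl
      rw [h3]
      linarith
    have hJlow : ∀ z : ℂ, (1:ℝ)/2 ≤ (‖1 + (ε:ℂ) * wdz η z‖)^2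
        - (‖(ε:ℂ) * wdzbar η z‖)^2 := by
      intro z
      have h1 := halow z
      have h2 := (habsb z).trans_lt hεC
      have h3 := norm_nonneg ((ε:ℂ) * wdzbar η z)
      nlinarith
    have hJpos : ∀ z : ℂ, 0 < (‖1 + (ε:ℂ) * wdz η z‖)^2
        - (‖(ε:ℂ) * wdzbar η z‖)^2 := fun z => lt_of_lt_of_le (by norm_num) (hJlow z)
    -- the variation map and its properties
    have hφdiff : Differentiable ℝ (fun w : ℂ => w + (ε:ℂ) * η w) :=
      differentiable_id.add (hηdiff.const_mul _)
    have hφcont : Continuous (fun w : ℂ => w + (ε:ℂ) * η w) := hφdiff.continuous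
    have hdist : ∀ x y : ℂ, dist (η x) (η y) ≤ C * dist x y := by
      intro x y
      have := hLip.dist_le_mul x y
      rwa [Real.coe_toNNReal _ hC0.le] at this
    have hdet : ∀ z : ℂ, |(fderiv ℝ (fun w : ℂ => w + (ε:ℂ) * η w) z).det|
        = (‖1 + (ε:ℂ) * wdz η z‖)^2 - (‖(ε:ℂ) * wdzbar η z‖)^2 := by
      intro z
      rw [det_fderiv_eq, (wdz_affine η hηdiff ε z).1, (wdz_affine η hηdiff ε z).2]
      exact abs_of_pos (hJpos z)
    have hinj : Function.Injective (fun w : ℂ => w + (ε:ℂ) * η w) := by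
      intro z w hzw
      simp only at hzw
      by_contra hne
      have hpos : 0 < ‖z - w‖ := by rwa [norm_pos_iff, sub_ne_zero]
      have heq : z - w = (ε:ℂ) * (η w - η z) := by linear_combination hzw
      have hnorm : ‖z - w‖ = |ε| * ‖η w - η z‖ := by
        rw [heq, norm_mul, Complex.norm_real, Real.norm_eq_abs]
      have hb : ‖η w - η z‖ ≤ C * ‖z - w‖ := by
        have := hdist w z
        rw [dist_eq_norm, dist_eq_norm] at this
        calc ‖η w - η z‖ ≤ C * ‖w - z‖ := this
          _ = C * ‖z - w‖ := by rw [norm_sub_rev]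
      have : ‖z - w‖ ≤ (|ε| * C) * ‖z - w‖ := by
        calc ‖z - w‖ = |ε| * ‖η w - η z‖ := hnorm
          _ ≤ |ε| * (C * ‖z - w‖) := mul_le_mul_of_nonneg_left hb (abs_nonneg ε)
          _ = (|ε| * C) * ‖z - w‖ := by ring
      nlinarith
    have hsurj : ∀ w : ℂ, ∃ z : ℂ, z + (ε:ℂ) * η z = w := by
      intro w
      have hglip : LipschitzWith (|ε| * C).toNNReal (fun z : ℂ => w - (ε:ℂ) * η z) := by
        apply LipschitzWith.of_dist_le_mul
        intro x y
        rw [Real.coe_toNNReal _ (by positivity)]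
        have hxy : (w - (ε:ℂ) * η x) - (w - (ε:ℂ) * η y) = (ε:ℂ) * (η y - η x) := by ring
        rw [dist_eq_norm, hxy, norm_mul, Complex.norm_real, Real.norm_eq_abs]
        calc |ε| * ‖η y - η x‖ ≤ |ε| * (C * dist y x) := by
              apply mul_le_mul_of_nonneg_left _ (abs_nonneg ε)
              rw [← dist_eq_norm]
              exact hdist y x
          _ = (|ε| * C) * dist x y := by rw [dist_comm]; ring
      have hcw : ContractingWith (|ε| * C).toNNReal (fun z : ℂ => w - (ε:ℂ) * η z) := by
        constructor
        · have : (|ε| * C) < 1 := hεC.trans (by norm_num)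
          exact_mod_cast Real.toNNReal_lt_one.2 this
        · exact hglip
      obtain ⟨z, hzfix, -⟩ := hcw.exists_fixedPoint w (edist_ne_top _ _)
      refine ⟨z, ?_⟩
      have : w - (ε:ℂ) * η z = z := hzfix
      linear_combination -this
    have himg : (fun w : ℂ => w + (ε:ℂ) * η w) '' Ω = Ω := by
      apply Subset.antisymm
      · rintro _ ⟨z, hz, rfl⟩
        exact hin ε hε₀' z hz
      · intro w hw
        obtain ⟨z, hz⟩ := hsurj w
        by_cases hzΩ : z ∈ Ω
        · exact ⟨z, hzΩ, hz⟩
        · exfalso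
          have hzK : z ∉ tsupport η := fun hk => hzΩ (hKΩ hk)
          have h0 := (hz0 z hzK).1
          rw [h0, mul_zero, add_zero] at hz
          exact hzΩ (hz ▸ hw)
    have hmapK : ∀ z ∈ tsupport η, z + (ε:ℂ) * η z ∈ K₁ := by
      intro z hz
      apply Metric.mem_cthickening_of_dist_le _ z _ _ hz
      rw [dist_eq_norm, add_sub_cancel_left, norm_mul, Complex.norm_real, Real.norm_eq_abs]
      calc |ε| * ‖η z‖ ≤ |ε| * C := mul_le_mul_of_nonneg_left (hηb z) (abs_nonneg ε)
        _ ≤ r/2 := hεr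
    have hmapΩ : ∀ z ∈ Ω, z + (ε:ℂ) * η z ∈ Ω := hin ε hε₀'
    -- change of variables
    have hf' : ∀ z ∈ Ω, HasFDerivWithinAt (fun w : ℂ => w + (ε:ℂ) * η w)
        (fderiv ℝ (fun w : ℂ => w + (ε:ℂ) * η w) z) Ω z :=
      fun z _ => (hφdiff z).hasFDerivAt.hasFDerivWithinAt
    have hCoV : E0 = ∫ z in Ω, (((‖1 + (ε:ℂ) * wdz η z‖)^2
          - (‖(ε:ℂ) * wdzbar η z‖)^2)
        * ((‖wdz h (z + (ε:ℂ) * η z)‖)^2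
            + (‖wdzbar h (z + (ε:ℂ) * η z)‖)^2)) := by
      have hcv := integral_image_eq_integral_abs_det_fderiv_smul volume hmΩ hf'
        hinj.injOn (fun z => (‖wdz h z‖)^2 + (‖wdzbar h z‖)^2)
      rw [himg] at hcv
      rw [hE0def, hcv]
      apply setIntegral_congr_fun hmΩ
      intro z _
      simp only [smul_eq_mul]
      rw [hdet z]
    have hIntJG : IntegrableOn (fun z => (((‖1 + (ε:ℂ) * wdz η z‖)^2
          - (‖(ε:ℂ) * wdzbar η z‖)^2)
        * ((‖wdz h (z + (ε:ℂ) * η z)‖)^2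
            + (‖wdzbar h (z + (ε:ℂ) * η z)‖)^2))) Ω volume := by
      have hiff := integrableOn_image_iff_integrableOn_abs_det_fderiv_smul volume hmΩ hf'
        hinj.injOn (fun z => (‖wdz h z‖)^2 + (‖wdzbar h z‖)^2)
      rw [himg] at hiff
      have hint := hiff.mp hfin
      apply hint.congr_fun _ hmΩ
      intro z _
      simp only [smul_eq_mul]
      rw [hdet z]
    -- measurability of the pieces
    have hmφ : Measurable (fun z : ℂ => z + (ε:ℂ) * η z) := hφcont.measurable
    have hmGφ : Measurable (fun z => (‖wdz h (z + (ε:ℂ) * η z)‖)^2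
        + (‖wdzbar h (z + (ε:ℂ) * η z)‖)^2) := hmG.comp hmφ
    have hmTφ : Measurable (fun z => wdz h (z + (ε:ℂ) * η z)
        * (starRingEnd ℂ) (wdzbar h (z + (ε:ℂ) * η z))) := hmT.comp hmφ
    have hmηz : Measurable (wdz η) := (hmwdz η).1
    have hmηzb : Measurable (wdzbar η) := (hmwdz η).2
    -- integrable pieces with uniform bounds
    have hu2m : Measurable (fun z => (wdz h (z + (ε:ℂ) * η z)
        * (starRingEnd ℂ) (wdzbar h (z + (ε:ℂ) * η z)) * wdzbar η z).re) :=
      Complex.measurable_re.comp (hmTφ.mul hmηzb)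
    have hu2bd : ∀ z ∈ Ω, ‖(wdz h (z + (ε:ℂ) * η z)
        * (starRingEnd ℂ) (wdzbar h (z + (ε:ℂ) * η z)) * wdzbar η z).re‖ ≤ CT * C := by
      intro z _
      by_cases hzK : z ∈ tsupport η
      · rw [Real.norm_eq_abs]
        refine (Complex.abs_re_le_norm _).trans ?_
        rw [norm_mul]
        have h1 : ‖wdz h (z + (ε:ℂ) * η z)
            * (starRingEnd ℂ) (wdzbar h (z + (ε:ℂ) * η z))‖ ≤ CT := hCT _ (hmapK z hzK)
        have h2 : ‖wdzbar η z‖ ≤ C := (hwb z).2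
        exact mul_le_mul h1 h2 (norm_nonneg _) hCT0
      · rw [(hz0 z hzK).2.2, mul_zero, Complex.zero_re, norm_zero]
        positivity
    have hu2 : IntegrableOn (fun z => (wdz h (z + (ε:ℂ) * η z)
        * (starRingEnd ℂ) (wdzbar h (z + (ε:ℂ) * η z)) * wdzbar η z).re) Ω volume :=
      Measure.integrableOn_of_bounded hvolΩ.ne hu2m.aestronglyMeasurable
        (ae_restrict_of_forall_mem hmΩ hu2bd)
    have hu13m : Measurable (fun z => 2 * ((‖wdz h (z + (ε:ℂ) * η z)‖)^2
          + (‖wdzbar h (z + (ε:ℂ) * η z)‖)^2) * (‖wdzbar η z‖)^2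
        + 4 * (wdz h (z + (ε:ℂ) * η z) * (starRingEnd ℂ) (wdzbar h (z + (ε:ℂ) * η z))
            * wdz η z * wdzbar η z).re) := by
      apply Measurable.add
      · exact ((measurable_const.mul hmGφ).mul
          ((continuous_norm.measurable.comp hmηzb).pow_const 2))
      · exact measurable_const.mul
          (Complex.measurable_re.comp ((hmTφ.mul hmηz).mul hmηzb))
    have hu13bd : ∀ z ∈ Ω, ‖2 * ((‖wdz h (z + (ε:ℂ) * η z)‖)^2
          + (‖wdzbar h (z + (ε:ℂ) * η z)‖)^2) * (‖wdzbar η z‖)^2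
        + 4 * (wdz h (z + (ε:ℂ) * η z) * (starRingEnd ℂ) (wdzbar h (z + (ε:ℂ) * η z))
            * wdz η z * wdzbar η z).re‖ ≤ 2*CG*C^2 + 4*CT*C^2 := by
      intro z _
      by_cases hzK : z ∈ tsupport η
      · set x : ℝ := (‖wdz h (z + (ε:ℂ) * η z)‖)^2
            + (‖wdzbar h (z + (ε:ℂ) * η z)‖)^2 with hxdef
        set y : ℝ := (wdz h (z + (ε:ℂ) * η z) * (starRingEnd ℂ) (wdzbar h (z + (ε:ℂ) * η z))
            * wdz η z * wdzbar η z).re with hydef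
        set n : ℝ := ‖wdzbar η z‖ with hndef
        have hx0 : 0 ≤ x := by rw [hxdef]; positivity
        have hn0 : 0 ≤ n := norm_nonneg _
        have hnC : n ≤ C := (hwb z).2
        have hG1 : x ≤ CG := by
          have := hCG _ (hmapK z hzK)
          rw [Real.norm_eq_abs] at this
          exact (le_abs_self _).trans this
        have hT1 : ‖wdz h (z + (ε:ℂ) * η z)
            * (starRingEnd ℂ) (wdzbar h (z + (ε:ℂ) * η z))‖ ≤ CT := hCT _ (hmapK z hzK)
        have hy : |y| ≤ CT * C^2 := by
          rw [hydef]
          refine (Complex.abs_re_le_norm _).trans ?_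
          rw [norm_mul, norm_mul]
          calc ‖wdz h (z + (ε:ℂ) * η z)
                * (starRingEnd ℂ) (wdzbar h (z + (ε:ℂ) * η z))‖ * ‖wdz η z‖
                  * ‖wdzbar η z‖
              ≤ CT * C * C := by
                apply mul_le_mul _ (hwb z).2 (norm_nonneg _) (by positivity)
                exact mul_le_mul hT1 (hwb z).1 (norm_nonneg _) hCT0
            _ = CT * C^2 := by ring
        rw [Real.norm_eq_abs]
        have habs : |2*x*n^2 + 4*y| ≤ |2*x*n^2| + |4*y| := abs_add_le _ _
        have hn2 : n^2 ≤ C^2 := by nlinarith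
        have h1 : |2*x*n^2| ≤ 2*CG*C^2 := by
          rw [_root_.abs_of_nonneg (by positivity)]
          nlinarith [mul_le_mul hG1 hn2 (by positivity) hCG0]
        have h2 : |4*y| ≤ 4*(CT*C^2) := by
          rw [abs_mul, _root_.abs_of_nonneg (by norm_num : (0:ℝ) ≤ 4)]
          linarith
        calc |2*x*n^2 + 4*y| ≤ |2*x*n^2| + |4*y| := habs
          _ ≤ 2*CG*C^2 + 4*(CT*C^2) := add_le_add h1 h2
          _ = 2*CG*C^2 + 4*CT*C^2 := by ring
      · rw [(hz0 z hzK).2.2]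
        simp only [map_zero, mul_zero, Complex.zero_re]
        have hCpos : (0:ℝ) < C := hC0
        have : |(0:ℝ)| ≤ 2*CG*C^2 + 4*CT*C^2 := by
          rw [abs_zero]; positivity
        simpa using this
    have hu13 : IntegrableOn (fun z => 2 * ((‖wdz h (z + (ε:ℂ) * η z)‖)^2
          + (‖wdzbar h (z + (ε:ℂ) * η z)‖)^2) * (‖wdzbar η z‖)^2
        + 4 * (wdz h (z + (ε:ℂ) * η z) * (starRingEnd ℂ) (wdzbar h (z + (ε:ℂ) * η z))
            * wdz η z * wdzbar η z).re) Ω volume :=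
      Measure.integrableOn_of_bounded hvolΩ.ne hu13m.aestronglyMeasurable
        (ae_restrict_of_forall_mem hmΩ hu13bd)
    refine ⟨?_, ?_, hu2⟩
    · -- the energy identity
      have hpt : EqOn
          (fun z => (‖wdz (fun w => h (w + (ε:ℂ) * η w)) z‖)^2
            + (‖wdzbar (fun w => h (w + (ε:ℂ) * η w)) z‖)^2)
          (fun z =>
            ((‖1 + (ε:ℂ) * wdz η z‖)^2 - (‖(ε:ℂ) * wdzbar η z‖)^2)
              * ((‖wdz h (z + (ε:ℂ) * η z)‖)^2
                  + (‖wdzbar h (z + (ε:ℂ) * η z)‖)^2)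
            + ε * (4 * (wdz h (z + (ε:ℂ) * η z)
                * (starRingEnd ℂ) (wdzbar h (z + (ε:ℂ) * η z)) * wdzbar η z).re)
            + ε^2 * (2 * ((‖wdz h (z + (ε:ℂ) * η z)‖)^2
                  + (‖wdzbar h (z + (ε:ℂ) * η z)‖)^2)
                    * (‖wdzbar η z‖)^2
              + 4 * (wdz h (z + (ε:ℂ) * η z) * (starRingEnd ℂ) (wdzbar h (z + (ε:ℂ) * η z))
                  * wdz η z * wdzbar η z).re)) Ω := by
        intro z hz
        have hhd : DifferentiableAt ℝ h (z + (ε:ℂ) * η z) :=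
          (hh.differentiableOn one_ne_zero).differentiableAt (hΩo.mem_nhds (hmapΩ z hz))
        exact pointwise_energy h η ε z hhd hηdiff
      have hint2 : IntegrableOn (fun z => ε * (4 * (wdz h (z + (ε:ℂ) * η z)
          * (starRingEnd ℂ) (wdzbar h (z + (ε:ℂ) * η z)) * wdzbar η z).re)) Ω volume :=
        (hu2.const_mul 4).const_mul ε
      have hint3 : IntegrableOn (fun z => ε^2 * (2 * ((‖wdz h (z + (ε:ℂ) * η z)‖)^2
            + (‖wdzbar h (z + (ε:ℂ) * η z)‖)^2) * (‖wdzbar η z‖)^2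
          + 4 * (wdz h (z + (ε:ℂ) * η z) * (starRingEnd ℂ) (wdzbar h (z + (ε:ℂ) * η z))
              * wdz η z * wdzbar η z).re)) Ω volume :=
        hu13.const_mul (ε^2)
      have e1 : energy Ω (fun z => h (z + (ε:ℂ) * η z))
          = ∫ z in Ω, (((‖1 + (ε:ℂ) * wdz η z‖)^2
              - (‖(ε:ℂ) * wdzbar η z‖)^2)
              * ((‖wdz h (z + (ε:ℂ) * η z)‖)^2
                  + (‖wdzbar h (z + (ε:ℂ) * η z)‖)^2)
            + ε * (4 * (wdz h (z + (ε:ℂ) * η z)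
                * (starRingEnd ℂ) (wdzbar h (z + (ε:ℂ) * η z)) * wdzbar η z).re)
            + ε^2 * (2 * ((‖wdz h (z + (ε:ℂ) * η z)‖)^2
                  + (‖wdzbar h (z + (ε:ℂ) * η z)‖)^2)
                    * (‖wdzbar η z‖)^2
              + 4 * (wdz h (z + (ε:ℂ) * η z) * (starRingEnd ℂ) (wdzbar h (z + (ε:ℂ) * η z))
                  * wdz η z * wdzbar η z).re)) := by
        simp only [energy]
        exact setIntegral_congr_fun hmΩ hpt
      have hsplit := integral_add (μ := volume.restrict Ω) (hIntJG.add hint2) hint3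
      have hsplit2 := integral_add (μ := volume.restrict Ω) hIntJG hint2
      simp only [Pi.add_apply] at hsplit hsplit2
      rw [e1, hsplit, hsplit2, integral_const_mul, integral_const_mul, integral_const_mul,
        ← hCoV]
    · -- the uniform bound on R
      rw [hRdef, hBdef]
      have := norm_setIntegral_le_of_norm_le_const (μ := volume) (s := Ω) hvolΩ hu13bd
      rw [Real.norm_eq_abs] at this
      exact this
  -- continuity of Ir at 0
  set V : ℝ := (volume Ω).toReal with hVdef
  have hV0 : 0 ≤ V := ENNReal.toReal_nonneg
  have hIcont : ∀ c : ℝ, 0 < c → ∃ d : ℝ, 0 < d ∧ ∀ ε : ℝ, |ε| < d → |ε| < δ →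
      |Ir ε - Ir 0| ≤ c := by
    intro c hc
    have hTuc := hK₁c.uniformContinuousOn_of_continuous (hTc.mono hK₁Ω)
    rw [Metric.uniformContinuousOn_iff] at hTuc
    obtain ⟨d, hd, hduc⟩ := hTuc (c/(C*V + 1)) (by positivity)
    refine ⟨d/(C+1), by positivity, ?_⟩
    intro ε hεd hεδ
    obtain ⟨-, -, hu2ε⟩ := key ε hεδ
    obtain ⟨-, -, hu20⟩ := key 0 (by simpa using hδpos)
    have hdiff : Ir ε - Ir 0 = ∫ z in Ω,
        ((wdz h (z + (ε:ℂ) * η z) * (starRingEnd ℂ) (wdzbar h (z + (ε:ℂ) * η z))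
            * wdzbar η z).re
          - (wdz h (z + ((0:ℝ):ℂ) * η z) * (starRingEnd ℂ) (wdzbar h (z + ((0:ℝ):ℂ) * η z))
            * wdzbar η z).re) := by
      rw [hIrdef]
      exact (integral_sub hu2ε hu20).symm
    have hptbd : ∀ z ∈ Ω, ‖(wdz h (z + (ε:ℂ) * η z)
          * (starRingEnd ℂ) (wdzbar h (z + (ε:ℂ) * η z)) * wdzbar η z).re
        - (wdz h (z + ((0:ℝ):ℂ) * η z) * (starRingEnd ℂ) (wdzbar h (z + ((0:ℝ):ℂ) * η z))
            * wdzbar η z).re‖ ≤ (c/(C*V + 1)) * C := by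
      intro z _
      by_cases hzK : z ∈ tsupport η
      · have hz' : z + ((0:ℝ):ℂ) * η z = z := by simp
        rw [hz']
        have hφK : z + (ε:ℂ) * η z ∈ K₁ := by
          -- need the per-ε map bound; reconstruct
          apply Metric.mem_cthickening_of_dist_le _ z _ _ hzK
          rw [dist_eq_norm, add_sub_cancel_left, norm_mul, Complex.norm_real, Real.norm_eq_abs]
          have h1 : |ε| * ‖η z‖ ≤ |ε| * C := mul_le_mul_of_nonneg_left (hηb z) (abs_nonneg ε)
          have h2 : |ε| * C ≤ r/2 := by
            have h3 : |ε| ≤ r/(2*C) := le_of_lt (lt_of_lt_of_le hεδ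
              ((min_le_right _ _).trans (min_le_right _ _)))
            calc |ε| * C ≤ (r/(2*C)) * C := mul_le_mul_of_nonneg_right h3 hC0.le
              _ = r/2 := by field_simp
          linarith
        have hzK₁ : z ∈ K₁ := hKK₁ hzK
        have hdistz : dist (z + (ε:ℂ) * η z) z < d := by
          rw [dist_eq_norm, add_sub_cancel_left, norm_mul, Complex.norm_real, Real.norm_eq_abs]
          have h1 : |ε| * ‖η z‖ ≤ |ε| * C := mul_le_mul_of_nonneg_left (hηb z) (abs_nonneg ε)
          have h2 : |ε| * C < d := by
            have : |ε| < d/(C+1) := hεd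
            calc |ε| * C < (d/(C+1)) * C := mul_lt_mul_of_pos_right this hC0
              _ < d := by
                rw [div_mul_eq_mul_div, div_lt_iff₀ (by linarith)]
                nlinarith
          linarith
        have hTd := hduc _ hφK z hzK₁ hdistz
        rw [dist_eq_norm] at hTd
        have hfact : (wdz h (z + (ε:ℂ) * η z) * (starRingEnd ℂ) (wdzbar h (z + (ε:ℂ) * η z))
              * wdzbar η z).re
            - (wdz h z * (starRingEnd ℂ) (wdzbar h z) * wdzbar η z).re
            = ((wdz h (z + (ε:ℂ) * η z) * (starRingEnd ℂ) (wdzbar h (z + (ε:ℂ) * η z))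
              - wdz h z * (starRingEnd ℂ) (wdzbar h z)) * wdzbar η z).re := by
          rw [sub_mul, Complex.sub_re]
        rw [Real.norm_eq_abs, hfact]
        refine (Complex.abs_re_le_norm _).trans ?_
        rw [norm_mul]
        have h1 : ‖wdz h (z + (ε:ℂ) * η z)
              * (starRingEnd ℂ) (wdzbar h (z + (ε:ℂ) * η z))
            - wdz h z * (starRingEnd ℂ) (wdzbar h z)‖ ≤ c/(C*V + 1) := le_of_lt hTd
        exact mul_le_mul h1 (hwb z).2 (norm_nonneg _) (by positivity)
      · rw [(hz0 z hzK).2.2]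
        simp only [mul_zero, Complex.zero_re, sub_zero, norm_zero]
        positivity
    have hbound := norm_setIntegral_le_of_norm_le_const (μ := volume) (s := Ω) hvolΩ hptbd
    rw [Real.norm_eq_abs] at hbound
    rw [hdiff]
    refine hbound.trans ?_
    calc (c/(C*V + 1)) * C * (volume Ω).toReal = c * ((C*V)/(C*V+1)) := by
          rw [hVdef]; field_simp
      _ ≤ c * 1 := by
          apply mul_le_mul_of_nonneg_left _ hc.le
          rw [div_le_one (by positivity)]
          linarith
      _ = c := mul_one c
  -- identify the limit value
  have hB0 : 0 ≤ B := by
    rw [hBdef]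
    apply mul_nonneg _ ENNReal.toReal_nonneg
    nlinarith
  have hcint : IntegrableOn (fun z => wdz h z * (starRingEnd ℂ) (wdzbar h z) * wdzbar η z)
      Ω volume := by
    apply Measure.integrableOn_of_bounded (M := CT * C) hvolΩ.ne
      ((hmT.mul (hmwdz η).2).aestronglyMeasurable)
    apply ae_restrict_of_forall_mem hmΩ
    intro z _
    show ‖wdz h z * (starRingEnd ℂ) (wdzbar h z) * wdzbar η z‖ ≤ CT * C
    by_cases hzK : z ∈ tsupport η
    · have h1 : ‖wdz h z * (starRingEnd ℂ) (wdzbar h z)‖ ≤ CT := hCT _ (hKK₁ hzK)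
      rw [norm_mul]
      have h2 : ‖wdzbar η z‖ ≤ C := (hwb z).2
      exact mul_le_mul h1 h2 (norm_nonneg _) hCT0
    · rw [(hz0 z hzK).2.2, mul_zero, norm_zero]
      positivity
  have hIr0 : Ir 0 = (∫ z in Ω, wdz h z * (starRingEnd ℂ) (wdzbar h z) * wdzbar η z).re := by
    simp only [hIrdef, Complex.ofReal_zero, zero_mul, add_zero]
    have := integral_re (μ := volume.restrict Ω) hcint
    simpa using this
  -- conclude via the little-o characterization
  rw [hasDerivAt_iff_isLittleO]
  rw [Asymptotics.isLittleO_iff]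
  intro c hc
  obtain ⟨d, hd, hdI⟩ := hIcont (c/8) (by positivity)
  set ρ : ℝ := min (min d δ) (c/(2*(B+1))) with hρdef
  have hρ : 0 < ρ := lt_min (lt_min hd hδpos) (by positivity)
  have hball : Metric.ball (0:ℝ) ρ ∈ 𝓝 (0:ℝ) := Metric.ball_mem_nhds 0 hρ
  filter_upwards [hball] with ε hε
  rw [Metric.mem_ball, Real.dist_eq, sub_zero] at hε
  have hεδ : |ε| < δ := lt_of_lt_of_le hε ((min_le_left _ _).trans (min_le_right _ _))
  have hεd : |ε| < d := lt_of_lt_of_le hε ((min_le_left _ _).trans (min_le_left _ _))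
  have hεc : |ε| < c/(2*(B+1)) := lt_of_lt_of_le hε (min_le_right _ _)
  obtain ⟨hkey1, hkey2, -⟩ := key ε hεδ
  obtain ⟨hkey0, -, -⟩ := key 0 (by simpa using hδpos)
  have hΔ : |Ir ε - Ir 0| ≤ c/8 := hdI ε hεd hεδ
  simp only [sub_zero, smul_eq_mul]
  have h0simp : energy Ω (fun z => h (z + ((0:ℝ):ℂ) * η z)) = E0 := by
    rw [hkey0]; ring
  have hgoal : ‖E0 + ε * (4 * Ir ε) + ε^2 * R ε - E0 - ε * (4 * Ir 0)‖ ≤ c * ‖ε‖ := by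
    have heq : E0 + ε * (4 * Ir ε) + ε^2 * R ε - E0 - ε * (4 * Ir 0)
        = 4*ε*(Ir ε - Ir 0) + ε^2 * R ε := by ring
    rw [Real.norm_eq_abs, Real.norm_eq_abs, heq]
    have h1 : |4*ε*(Ir ε - Ir 0) + ε^2 * R ε| ≤ |4*ε*(Ir ε - Ir 0)| + |ε^2 * R ε| := abs_add_le _ _
    have h2 : |4*ε*(Ir ε - Ir 0)| = 4 * |ε| * |Ir ε - Ir 0| := by
      rw [abs_mul, abs_mul]
      norm_num
    have h3 : |ε^2 * R ε| = |ε|^2 * |R ε| := by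
      rw [abs_mul, _root_.abs_pow]
    have h4 : 4 * |ε| * |Ir ε - Ir 0| ≤ 4 * |ε| * (c/8) :=
      mul_le_mul_of_nonneg_left hΔ (by positivity)
    have h5 : |ε|^2 * |R ε| ≤ |ε| * (c/(2*(B+1))) * B := by
      have ha : |ε|^2 * |R ε| ≤ |ε|^2 * B := mul_le_mul_of_nonneg_left hkey2 (by positivity)
      have hb : |ε|^2 * B ≤ (|ε| * (c/(2*(B+1)))) * B := by
        apply mul_le_mul_of_nonneg_right _ hB0
        rw [sq]
        exact mul_le_mul_of_nonneg_left hεc.le (abs_nonneg ε)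
      exact ha.trans hb
    have h6 : |ε| * (c/(2*(B+1))) * B ≤ |ε| * (c/2) := by
      rw [mul_assoc]
      apply mul_le_mul_of_nonneg_left _ (abs_nonneg ε)
      rw [div_mul_eq_mul_div, div_le_div_iff₀ (by positivity) (by norm_num)]
      nlinarith
    calc |4*ε*(Ir ε - Ir 0) + ε^2 * R ε| ≤ |4*ε*(Ir ε - Ir 0)| + |ε^2 * R ε| := h1
      _ ≤ 4 * |ε| * (c/8) + |ε| * (c/2) := by
          rw [h2, h3]
          have := h5.trans h6
          linarith [h4]
      _ = c * |ε| := by ring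
  rw [hkey1, h0simp, ← hIr0]
  exact hgoal
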